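/- For 0 < p < 1 and n ≥ 2, both eigenvalues r± = (2n − 2p − 1 ± √Δ)/(2n), Δ = (1−2p)² + 4p(1−p)/n, of the matrix A lie strictly in (0,1); hence the affine iteration X ↦ AX + b converges to its unique fixed point from any initial condition. -/

import Mathlib

open Matrix Filter

private lemma absAux (a b u v d : ℝ) (ha : 0 ≤ a) (hb : 0 ≤ b)
    (hu : |u| ≤ d) (hv : |v| ≤ d) : |a * u + b * v| ≤ (a + b) * d := by
  calc |a * u + b * v| ≤ |a * u| + |b * v| := abs_add_le _ _
    _ = a * |u| + b * |v| := by rw [abs_mul, abs_mul, abs_of_nonneg ha, abs_of_nonneg hb]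
    _ ≤ (a + b) * d := by nlinarith [abs_nonneg u, abs_nonneg v]

theorem eigenvalues_in_unit_interval_and_convergence
    (n : ℕ) (hn : 2 ≤ n) (p σ2 : ℝ) (hp0 : 0 < p) (hp1 : p < 1) :
    (0 < (2 * (n : ℝ) - 2 * p - 1
            - Real.sqrt ((1 - 2 * p) ^ 2 + 4 * p * (1 - p) / n)) / (2 * n)
      ∧ (2 * (n : ℝ) - 2 * p - 1
            - Real.sqrt ((1 - 2 * p) ^ 2 + 4 * p * (1 - p) / n)) / (2 * n) < 1)
    ∧ (0 < (2 * (n : ℝ) - 2 * p - 1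
            + Real.sqrt ((1 - 2 * p) ^ 2 + 4 * p * (1 - p) / n)) / (2 * n)
      ∧ (2 * (n : ℝ) - 2 * p - 1
            + Real.sqrt ((1 - 2 * p) ^ 2 + 4 * p * (1 - p) / n)) / (2 * n) < 1)
    ∧ ∃ Xs : Fin 2 → ℝ,
        Xs = (!![1 - 2 * p / n, p / (n : ℝ) ^ 2;
                 (1 - p) / n, 1 - 1 / n]).mulVec Xs + ![p * σ2 / (n : ℝ) ^ 2, p * σ2 / n]
        ∧ (∀ Y : Fin 2 → ℝ,
            Y = (!![1 - 2 * p / n, p / (n : ℝ) ^ 2;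
                    (1 - p) / n, 1 - 1 / n]).mulVec Y + ![p * σ2 / (n : ℝ) ^ 2, p * σ2 / n]
            → Y = Xs)
        ∧ ∀ X0 : Fin 2 → ℝ,
            Tendsto
              (fun k => (fun X : Fin 2 → ℝ =>
                (!![1 - 2 * p / n, p / (n : ℝ) ^ 2;
                    (1 - p) / n, 1 - 1 / n]).mulVec X
                  + ![p * σ2 / (n : ℝ) ^ 2, p * σ2 / n])^[k] X0)
              atTop (nhds Xs) := by
  have hn' : (2 : ℝ) ≤ n := by exact_mod_cast hn
  have hnpos : (0 : ℝ) < n := by linarith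
  have hp1' : (0 : ℝ) < 1 - p := by linarith
  have hΔpos : 0 < (1 - 2 * p) ^ 2 + 4 * p * (1 - p) / n := by
    have h1 : 0 < 4 * p * (1 - p) / n := by positivity
    nlinarith [sq_nonneg (1 - 2 * p)]
  have hΔlt : (1 - 2 * p) ^ 2 + 4 * p * (1 - p) / n < 1 := by
    have h1 : 4 * p * (1 - p) / n ≤ 2 * p * (1 - p) := by
      rw [div_le_iff₀ hnpos]
      nlinarith [mul_pos hp0 hp1']
    nlinarith [mul_pos hp0 hp1']
  have hs0 : 0 < Real.sqrt ((1 - 2 * p) ^ 2 + 4 * p * (1 - p) / n) := Real.sqrt_pos.mpr hΔpos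
  have hs1 : Real.sqrt ((1 - 2 * p) ^ 2 + 4 * p * (1 - p) / n) < 1 := by
    calc Real.sqrt ((1 - 2 * p) ^ 2 + 4 * p * (1 - p) / n)
        < Real.sqrt 1 := Real.sqrt_lt_sqrt hΔpos.le hΔlt
      _ = 1 := Real.sqrt_one
  have h2n : (0 : ℝ) < 2 * n := by linarith
  refine ⟨⟨div_pos (by linarith) h2n, (div_lt_one h2n).mpr (by linarith)⟩,
    ⟨div_pos (by linarith) h2n, (div_lt_one h2n).mpr (by linarith)⟩, ?_⟩
  -- contraction part
  set F : (Fin 2 → ℝ) → (Fin 2 → ℝ) := fun X =>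
    (!![1 - 2 * p / n, p / (n : ℝ) ^ 2;
        (1 - p) / n, 1 - 1 / n]).mulVec X + ![p * σ2 / (n : ℝ) ^ 2, p * σ2 / n] with hF
  have hKnn : (0 : ℝ) ≤ 1 - p / n := by
    have : p / n ≤ 1 := by rw [div_le_one hnpos]; linarith
    linarith
  set K : NNReal := ⟨1 - p / n, hKnn⟩ with hKdef
  have hKc : (K : ℝ) = 1 - p / n := rfl
  have hF0 : ∀ X : Fin 2 → ℝ, F X 0
      = (1 - 2 * p / n) * X 0 + p / (n : ℝ) ^ 2 * X 1 + p * σ2 / (n : ℝ) ^ 2 := by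
    intro X
    simp [hF, Matrix.mulVec, dotProduct, Fin.sum_univ_two, Matrix.vecHead, Matrix.vecTail]
  have hF1 : ∀ X : Fin 2 → ℝ, F X 1
      = (1 - p) / n * X 0 + (1 - 1 / n) * X 1 + p * σ2 / n := by
    intro X
    simp [hF, Matrix.mulVec, dotProduct, Fin.sum_univ_two, Matrix.vecHead, Matrix.vecTail]
  have hlip : LipschitzWith K F := by
    apply LipschitzWith.of_dist_le_mul
    intro X Y
    have hd0 : |X 0 - Y 0| ≤ dist X Y := by
      rw [← Real.dist_eq]; exact dist_le_pi_dist X Y 0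
    have hd1 : |X 1 - Y 1| ≤ dist X Y := by
      rw [← Real.dist_eq]; exact dist_le_pi_dist X Y 1
    have hdnn : 0 ≤ dist X Y := dist_nonneg
    rw [dist_pi_le_iff (by positivity)]
    intro i
    fin_cases i
    · show dist (F X 0) (F Y 0) ≤ (K : ℝ) * dist X Y
      rw [Real.dist_eq, hF0, hF0]
      have ha : (0 : ℝ) ≤ 1 - 2 * p / n := by
        have : 2 * p / n ≤ 1 := by rw [div_le_one hnpos]; linarith
        linarith
      have hb : (0 : ℝ) ≤ p / (n : ℝ) ^ 2 := by positivity
      have key := absAux (1 - 2 * p / n) (p / (n : ℝ) ^ 2) (X 0 - Y 0) (X 1 - Y 1)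
        (dist X Y) ha hb hd0 hd1
      have heq : (1 - 2 * p / n) * X 0 + p / (n : ℝ) ^ 2 * X 1 + p * σ2 / (n : ℝ) ^ 2
          - ((1 - 2 * p / n) * Y 0 + p / (n : ℝ) ^ 2 * Y 1 + p * σ2 / (n : ℝ) ^ 2)
          = (1 - 2 * p / n) * (X 0 - Y 0) + p / (n : ℝ) ^ 2 * (X 1 - Y 1) := by ring
      rw [heq]
      refine key.trans ?_
      apply mul_le_mul_of_nonneg_right _ hdnn
      rw [hKc]
      have hdiff : (1 - p / (n : ℝ)) - (1 - 2 * p / (n : ℝ) + p / (n : ℝ) ^ 2)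
          = p * ((n : ℝ) - 1) / (n : ℝ) ^ 2 := by
        field_simp
        ring
      have hge : 0 ≤ p * ((n : ℝ) - 1) / (n : ℝ) ^ 2 := by
        apply div_nonneg _ (by positivity)
        nlinarith
      linarith
    · show dist (F X 1) (F Y 1) ≤ (K : ℝ) * dist X Y
      rw [Real.dist_eq, hF1, hF1]
      have ha : (0 : ℝ) ≤ (1 - p) / n := by positivity
      have hb : (0 : ℝ) ≤ 1 - 1 / n := by
        have : 1 / n ≤ (1 : ℝ) := by rw [div_le_one hnpos]; linarith
        linarith
      have key := absAux ((1 - p) / n) (1 - 1 / n) (X 0 - Y 0) (X 1 - Y 1)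
        (dist X Y) ha hb hd0 hd1
      have heq : (1 - p) / n * X 0 + (1 - 1 / n) * X 1 + p * σ2 / n
          - ((1 - p) / n * Y 0 + (1 - 1 / n) * Y 1 + p * σ2 / n)
          = (1 - p) / n * (X 0 - Y 0) + (1 - 1 / n) * (X 1 - Y 1) := by ring
      rw [heq]
      refine key.trans ?_
      apply mul_le_mul_of_nonneg_right _ hdnn
      rw [hKc]
      have : (1 - p) / n + (1 - 1 / n) = 1 - p / n := by field_simp; ring
      linarith [this.le]
  have hK1 : K < 1 := by
    rw [← NNReal.coe_lt_coe, hKc, NNReal.coe_one]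
    have : 0 < p / n := by positivity
    linarith
  have hcw : ContractingWith K F := ⟨hK1, hlip⟩
  refine ⟨hcw.fixedPoint F, (hcw.fixedPoint_isFixedPt).symm, ?_, ?_⟩
  · intro Y hY
    exact hcw.fixedPoint_unique hY.symm
  · intro X0
    exact hcw.tendsto_iterate_fixedPoint X0
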